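/- Fix k ≥ 1 and let φ : ℝᵏ → ℝ be a continuous function with |φ(x)| ≤ 1 for all x, such that φ(x) = 1 whenever ‖x‖ ∈ (10^{2n−1}+1, 10^{2n}−1) for some integer n ≥ 1, and φ(x) = −1 whenever ‖x‖ ∈ (10^{2n}+1, 10^{2n+1}−1) for some integer n ≥ 1, where ‖·‖ is the Euclidean norm. Then the averages (1/vol(B_r)) ∫_{B_r} φ(y) dy over Euclidean balls B_r of radius r centred at the origin do not converge as r → ∞; i.e. there is no c ∈ ℝ such that (1/vol(B_r)) ∫_{B_r} φ → c. (Example 3.1: the trivial foliation of ℝᵏ × ℝ^{m−k} by the leaves ℝᵏ × {t} admits a continuous function whose length average exists at no point.) -/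

import Mathlib

open Filter Topology MeasureTheory Metric

private lemma my_nontrivial (k : ℕ) (hk : 1 ≤ k) : Nontrivial (EuclideanSpace ℝ (Fin k)) := by
  have : 0 < Module.finrank ℝ (EuclideanSpace ℝ (Fin k)) := by
    simp only [finrank_euclideanSpace_fin]; omega
  exact Module.nontrivial_of_finrank_pos this

private lemma my_key (k : ℕ) (φ : EuclideanSpace ℝ (Fin k) → ℝ) (hφ : Continuous φ)
    (hbd : ∀ x, |φ x| ≤ 1) {s r : ℝ}
    (hone : ∀ x : EuclideanSpace ℝ (Fin k), s < ‖x‖ → ‖x‖ < r → φ x = 1) :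
    (volume (ball (0:EuclideanSpace ℝ (Fin k)) r)).toReal
      - 2 * (volume (closedBall (0:EuclideanSpace ℝ (Fin k)) s)).toReal
      ≤ ∫ y in ball (0:EuclideanSpace ℝ (Fin k)) r, φ y := by
  set B := ball (0:EuclideanSpace ℝ (Fin k)) r
  set C := closedBall (0:EuclideanSpace ℝ (Fin k)) s
  have hBfin : volume B < ⊤ := measure_ball_lt_top
  have hφint : IntegrableOn φ B := by
    refine Measure.integrableOn_of_bounded hBfin.ne hφ.aestronglyMeasurable
      (M := 1) (ae_of_all _ fun x => ?_)
    rw [Real.norm_eq_abs]; exact hbd x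
  have h1int : IntegrableOn (fun _ : EuclideanSpace ℝ (Fin k) => (1:ℝ)) B :=
    integrableOn_const hBfin.ne
  have hψint : IntegrableOn (fun x => φ x - 1) B := hφint.sub h1int
  have hsplit : (∫ y in B ∩ C, φ y - 1) + (∫ y in B \ C, φ y - 1)
      = ∫ y in B, φ y - 1 := integral_inter_add_diff measurableSet_closedBall hψint
  have hdiff : (∫ y in B \ C, φ y - 1) = 0 := by
    refine setIntegral_eq_zero_of_forall_eq_zero fun x hx => ?_
    have hxr : ‖x‖ < r := by simpa [B, mem_ball, dist_zero_right] using hx.1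
    have hxs : s < ‖x‖ := by
      by_contra h
      exact hx.2 (by simpa [C, mem_closedBall, dist_zero_right] using not_lt.1 h)
    rw [hone x hxs hxr]; ring
  have hbound : |∫ y in B ∩ C, φ y - 1| ≤ 2 * (volume C).toReal := by
    have h1 : ‖∫ y in B ∩ C, φ y - 1‖ ≤ 2 * (volume (B ∩ C)).toReal := by
      refine norm_setIntegral_le_of_norm_le_const
        (lt_of_le_of_lt (measure_mono Set.inter_subset_left) hBfin)
        (fun x _ => ?_)
      rw [Real.norm_eq_abs]
      have := hbd x
      cases abs_le.1 this with
      | intro h h' => rw [abs_le]; constructor <;> linarith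
    have h2 : (volume (B ∩ C)).toReal ≤ (volume C).toReal := by
      refine ENNReal.toReal_mono ?_ (measure_mono Set.inter_subset_right)
      exact measure_closedBall_lt_top.ne
    calc |∫ y in B ∩ C, φ y - 1| ≤ 2 * (volume (B ∩ C)).toReal := h1
      _ ≤ 2 * (volume C).toReal := by linarith
  have hsub : (∫ y in B, φ y - 1) = (∫ y in B, φ y) - (volume B).toReal := by
    rw [integral_sub hφint h1int, setIntegral_const, smul_eq_mul, mul_one]; rfl
  have : -(2 * (volume C).toReal) ≤ (∫ y in B, φ y - 1) := by
    rw [← hsplit, hdiff, add_zero]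
    have := abs_le.1 hbound
    linarith [this.1]
  rw [hsub] at this
  linarith

private lemma my_avg_ge (k : ℕ) (hk : 1 ≤ k) (φ : EuclideanSpace ℝ (Fin k) → ℝ)
    (hφ : Continuous φ) (hbd : ∀ x, |φ x| ≤ 1) {s r : ℝ}
    (hs : 0 ≤ s) (hr : 0 < r) (h9 : 9 * s ≤ 2 * r)
    (hone : ∀ x : EuclideanSpace ℝ (Fin k), s < ‖x‖ → ‖x‖ < r → φ x = 1) :
    (5:ℝ)/9 ≤ (∫ y in ball (0:EuclideanSpace ℝ (Fin k)) r, φ y) /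
      (volume (ball (0:EuclideanSpace ℝ (Fin k)) r)).toReal := by
  haveI := my_nontrivial k hk
  set V := (volume (ball (0:EuclideanSpace ℝ (Fin k)) 1)).toReal with hV
  have hVpos : 0 < V :=
    ENNReal.toReal_pos (measure_ball_pos _ _ one_pos).ne' measure_ball_lt_top.ne
  have hball : (volume (ball (0:EuclideanSpace ℝ (Fin k)) r)).toReal = r ^ k * V := by
    rw [Measure.addHaar_ball _ _ hr.le, ENNReal.toReal_mul,
      ENNReal.toReal_ofReal (pow_nonneg hr.le _), finrank_euclideanSpace_fin]
  have hcball : (volume (closedBall (0:EuclideanSpace ℝ (Fin k)) s)).toReal = s ^ k * V := by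
    rw [Measure.addHaar_closedBall _ _ hs, ENNReal.toReal_mul,
      ENNReal.toReal_ofReal (pow_nonneg hs _), finrank_euclideanSpace_fin]
  have hkey := my_key k φ hφ hbd hone
  rw [hball, hcball] at hkey
  have hsk : s ^ k ≤ (2/9) * r ^ k := by
    have h1 : s ≤ (2/9) * r := by linarith
    have h2 : s ^ k ≤ ((2/9) * r) ^ k := pow_le_pow_left₀ hs h1 k
    have h3 : ((2/9) * r) ^ k = (2/9)^k * r ^ k := mul_pow _ _ _
    have h4 : ((2:ℝ)/9)^k ≤ (2/9)^1 := pow_le_pow_of_le_one (by norm_num) (by norm_num) hk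
    have h5 : (0:ℝ) ≤ r ^ k := pow_nonneg hr.le k
    nlinarith
  have hD : 0 < r ^ k * V := mul_pos (pow_pos hr k) hVpos
  rw [hball, le_div_iff₀ hD]
  nlinarith

theorem ball_averages_do_not_converge
    (k : ℕ) (hk : 1 ≤ k)
    (φ : EuclideanSpace ℝ (Fin k) → ℝ) (hφ : Continuous φ)
    (hbd : ∀ x, |φ x| ≤ 1)
    (hpos : ∀ x : EuclideanSpace ℝ (Fin k),
      (∃ n : ℕ, 1 ≤ n ∧ (10:ℝ)^(2*n-1) + 1 < ‖x‖ ∧ ‖x‖ < (10:ℝ)^(2*n) - 1) → φ x = 1)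
    (hneg : ∀ x : EuclideanSpace ℝ (Fin k),
      (∃ n : ℕ, 1 ≤ n ∧ (10:ℝ)^(2*n) + 1 < ‖x‖ ∧ ‖x‖ < (10:ℝ)^(2*n+1) - 1) → φ x = -1) :
    ¬ ∃ c : ℝ, Tendsto
      (fun r : ℝ => (∫ y in Metric.ball (0 : EuclideanSpace ℝ (Fin k)) r, φ y) /
        (volume (Metric.ball (0 : EuclideanSpace ℝ (Fin k)) r)).toReal)
      atTop (𝓝 c) := by
  rintro ⟨c, hc⟩
  have hten : ∀ m : ℕ, 1 ≤ m → (10:ℝ) ≤ (10:ℝ)^m := fun m hm => by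
    calc (10:ℝ) = 10^1 := (pow_one _).symm
    _ ≤ 10^m := pow_le_pow_right₀ (by norm_num) hm
  -- positive radii estimate
  have hposavg : ∀ n : ℕ, (5:ℝ)/9 ≤
      (∫ y in Metric.ball (0 : EuclideanSpace ℝ (Fin k)) ((10:ℝ)^(2*(n+1)) - 1), φ y) /
        (volume (Metric.ball (0 : EuclideanSpace ℝ (Fin k)) ((10:ℝ)^(2*(n+1)) - 1))).toReal := by
    intro n
    have hm : 1 ≤ n + 1 := Nat.le_add_left 1 n
    have h1 : (10:ℝ) ≤ (10:ℝ)^(2*(n+1)-1) := hten _ (by omega)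
    have hsplit : (10:ℝ)^(2*(n+1)) = 10 * (10:ℝ)^(2*(n+1)-1) := by
      have h3 : 2*(n+1)-1 = 2*n+1 := by omega
      have h2 : 2*(n+1) = (2*n+1)+1 := by omega
      rw [h3, h2, pow_succ]; ring
    refine my_avg_ge k hk φ hφ hbd (s := (10:ℝ)^(2*(n+1)-1)+1) ?_ ?_ ?_ ?_
    · positivity
    · rw [hsplit]; linarith
    · rw [hsplit]; linarith
    · intro x h1x h2x; exact hpos x ⟨n+1, hm, h1x, h2x⟩
  -- negative radii estimate
  have hnegavg : ∀ n : ℕ,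
      (∫ y in Metric.ball (0 : EuclideanSpace ℝ (Fin k)) ((10:ℝ)^(2*(n+1)+1) - 1), φ y) /
        (volume (Metric.ball (0 : EuclideanSpace ℝ (Fin k)) ((10:ℝ)^(2*(n+1)+1) - 1))).toReal
      ≤ -((5:ℝ)/9) := by
    intro n
    have hm : 1 ≤ n + 1 := Nat.le_add_left 1 n
    have h1 : (10:ℝ) ≤ (10:ℝ)^(2*(n+1)) := hten _ (by omega)
    have hsplit : (10:ℝ)^(2*(n+1)+1) = 10 * (10:ℝ)^(2*(n+1)) := by
      rw [pow_succ]; ring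
    have hneg' : ∀ x : EuclideanSpace ℝ (Fin k),
        (10:ℝ)^(2*(n+1)) + 1 < ‖x‖ → ‖x‖ < (10:ℝ)^(2*(n+1)+1) - 1 → -φ x = 1 := by
      intro x h1x h2x
      rw [hneg x ⟨n+1, hm, h1x, h2x⟩]; ring
    have := my_avg_ge k hk (fun x => -φ x) hφ.neg
      (fun x => by rw [abs_neg]; exact hbd x)
      (s := (10:ℝ)^(2*(n+1))+1) (r := (10:ℝ)^(2*(n+1)+1)-1)
      (by positivity) (by rw [hsplit]; linarith) (by rw [hsplit]; linarith) hneg'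
    rw [integral_neg, neg_div] at this
    linarith
  -- two sequences tending to infinity
  have haT : Tendsto (fun n : ℕ => (10:ℝ)^(2*(n+1)) - 1) atTop atTop := by
    have h0 : Tendsto (fun n : ℕ => (10:ℝ)^(2*(n+1))) atTop atTop :=
      (tendsto_pow_atTop_atTop_of_one_lt (by norm_num : (1:ℝ) < 10)).comp
        (tendsto_atTop_mono (fun n => show id n ≤ 2*(n+1) by simp; omega) tendsto_id)
    simpa [sub_eq_add_neg] using tendsto_atTop_add_const_right atTop (-1:ℝ) h0
  have hbT : Tendsto (fun n : ℕ => (10:ℝ)^(2*(n+1)+1) - 1) atTop atTop := by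
    have h0 : Tendsto (fun n : ℕ => (10:ℝ)^(2*(n+1)+1)) atTop atTop :=
      (tendsto_pow_atTop_atTop_of_one_lt (by norm_num : (1:ℝ) < 10)).comp
        (tendsto_atTop_mono (fun n => show id n ≤ 2*(n+1)+1 by simp; omega) tendsto_id)
    simpa [sub_eq_add_neg] using tendsto_atTop_add_const_right atTop (-1:ℝ) h0
  have h59 : (5:ℝ)/9 ≤ c :=
    ge_of_tendsto (hc.comp haT) (Eventually.of_forall hposavg)
  have h59' : c ≤ -((5:ℝ)/9) :=
    le_of_tendsto (hc.comp hbT) (Eventually.of_forall hnegavg)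
  linarith
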